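/- Let m, n ≥ 1 and q = (q_1,…,q_n) ∈ (0,1)^n, and let A(q) be a random m×n matrix whose entries are independent, with every entry in column j equal to 1 with probability q_j and 0 with probability 1 − q_j. Then for every permutation σ of {1,…,n} and every integer h ≥ 0, Prob(L(A(q)) ≤ h) = Prob(L(A(q∘σ)) ≤ h); i.e., the distribution of the longest increasing path is a symmetric function of the column probabilities (q_1,…,q_n). -/

import Mathlib

open MeasureTheory
open scoped Classical

/-- `L(A)`: the maximal length of an increasing path in a 0-1 matrix `A`. -/
noncomputable def pathLen {m n : ℕ} (A : Fin m × Fin n → Bool) : ℕ :=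
  sSup {k | ∃ f : Fin k → Fin m × Fin n,
    (∀ i, A (f i) = true) ∧
    ∀ i j : Fin k, i < j → (f i).1 < (f j).1 ∧ (f i).2 ≤ (f j).2}

/-- The distribution of a random `m × n` 0-1 matrix with independent entries, the
entries in column `j` being 1 with probability `q j`. -/
noncomputable def colBernoulliMatrixMeasure (m n : ℕ) (q : Fin n → ℝ)
    (hq : ∀ j, q j ≤ 1) : Measure (Fin m × Fin n → Bool) :=
  Measure.pi fun idx =>
    (PMF.bernoulli (Real.toNNReal (q idx.2))
      (Real.toNNReal_le_one.mpr (hq idx.2))).toMeasure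

open Finset

namespace ODB

variable {m : ℕ}

/-- ±1 value of a row in a pair of columns. -/
def eP (a b : Fin m → Bool) (x : Fin m) : ℤ :=
  (if a x then 1 else 0) - (if b x then 1 else 0)

/-- prefix sums -/
def Pf (a b : Fin m → Bool) (t : ℕ) : ℤ :=
  ∑ x : Fin m, if (x : ℕ) < t then eP a b x else 0

/-- number of `true`s of `a` in window `[u, w)` -/
def cnt (a : Fin m → Bool) (u w : ℕ) : ℕ :=
  (univ.filter fun x : Fin m => u ≤ (x : ℕ) ∧ (x : ℕ) < w ∧ a x = true).card

/-- max number of entries of a 2-column increasing path within row window `[u,v)` -/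
def kfun (a b : Fin m → Bool) (u v : ℕ) : ℕ :=
  (Finset.Icc u v).sup fun w => cnt a u w + cnt b w v

lemma cnt_eq_sum (a : Fin m → Bool) (u w : ℕ) :
    cnt a u w = ∑ x : Fin m, if u ≤ (x : ℕ) ∧ (x : ℕ) < w ∧ a x = true then 1 else 0 := by
  rw [cnt, card_filter]

lemma termZ (a b : Fin m → Bool) {u w v : ℕ} (huw : u ≤ w) (hwv : w ≤ v) :
    (cnt a u w : ℤ) + cnt b w v = cnt b u v + Pf a b w - Pf a b u := by
  rw [cnt_eq_sum, cnt_eq_sum, cnt_eq_sum, Pf, Pf]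
  push_cast
  rw [← Finset.sum_add_distrib, ← Finset.sum_add_distrib, ← Finset.sum_sub_distrib]
  apply Finset.sum_congr rfl
  intro x _
  rcases Bool.eq_false_or_eq_true (a x) with hax | hax <;>
    rcases Bool.eq_false_or_eq_true (b x) with hbx | hbx <;>
      simp [eP, hax, hbx] <;> split_ifs <;> omega

lemma cnt_update_false (a : Fin m → Bool) (r : Fin m) (ha : a r = true) (u w : ℕ) :
    cnt (Function.update a r false) u w
      = cnt a u w - (if u ≤ (r : ℕ) ∧ (r : ℕ) < w then 1 else 0) ∧
    cnt a u w = cnt (Function.update a r false) u w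
      + (if u ≤ (r : ℕ) ∧ (r : ℕ) < w then 1 else 0) := by
  have key : cnt a u w = cnt (Function.update a r false) u w
      + (if u ≤ (r : ℕ) ∧ (r : ℕ) < w then 1 else 0) := by
    rw [cnt_eq_sum, cnt_eq_sum]
    have : (if u ≤ (r : ℕ) ∧ (r : ℕ) < w then 1 else 0)
        = ∑ x : Fin m, if x = r then (if u ≤ (r : ℕ) ∧ (r : ℕ) < w then 1 else 0) else 0 := by
      rw [Finset.sum_ite_eq' univ r]; simp
    rw [this, ← Finset.sum_add_distrib]
    apply Finset.sum_congr rfl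
    intro x _
    by_cases hx : x = r
    · subst hx
      simp only [Function.update_self, ha, if_pos rfl]
      split_ifs <;> simp_all
    · simp only [Function.update_of_ne hx, if_neg hx]
      omega
  exact ⟨by omega, key⟩

lemma cnt_update_true (b : Fin m → Bool) (r : Fin m) (hb : b r = false) (u w : ℕ) :
    cnt (Function.update b r true) u w
      = cnt b u w + (if u ≤ (r : ℕ) ∧ (r : ℕ) < w then 1 else 0) := by
  have ha' : (Function.update b r true) r = true := by simp
  have := (cnt_update_false (Function.update b r true) r ha' u w).2
  have hbb : Function.update (Function.update b r true) r false = b := by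
    funext x
    by_cases hx : x = r
    · subst hx; simp [hb]
    · simp [Function.update_of_ne hx]
  rw [hbb] at this
  omega

lemma Pf_flip (a b : Fin m → Bool) (r : Fin m) (ha : a r = true) (hb : b r = false) (t : ℕ) :
    Pf (Function.update a r false) (Function.update b r true) t
      = Pf a b t - (if (r : ℕ) < t then 2 else 0) := by
  rw [Pf, Pf]
  have : (if (r : ℕ) < t then (2:ℤ) else 0)
      = ∑ x : Fin m, if x = r then (if (r : ℕ) < t then (2:ℤ) else 0) else 0 := by
    rw [Finset.sum_ite_eq' univ r]; simp
  rw [this, ← Finset.sum_sub_distrib]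
  apply Finset.sum_congr rfl
  intro x _
  by_cases hx : x = r
  · subst hx
    simp only [eP, Function.update_self, ha, hb, if_pos rfl]
    split_ifs <;> simp_all <;> omega
  · simp only [eP, Function.update_of_ne hx, if_neg hx]
    ring

/-- The key combinatorial lemma: flipping the row at the first attainment of
the maximum of the prefix sums preserves `kfun` on every window. -/
theorem kfun_flip (a b : Fin m → Bool) (r : Fin m) (ha : a r = true) (hb : b r = false)
    (hmax : ∀ w ≤ m, Pf a b w ≤ Pf a b ((r : ℕ) + 1))
    (hfirst : ∀ w ≤ (r : ℕ), Pf a b w < Pf a b ((r : ℕ) + 1))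
    (u v : ℕ) (hv : v ≤ m) :
    kfun (Function.update a r false) (Function.update b r true) u v = kfun a b u v := by
  set a' := Function.update a r false with ha'
  set b' := Function.update b r true with hb'
  by_cases hcase : u ≤ (r : ℕ) ∧ (r : ℕ) < v
  · obtain ⟨hur, hrv⟩ := hcase
    -- `Pf a b r + 1 = Pf a b (r+1)`
    have hstep : Pf a b (r : ℕ) + 1 = Pf a b ((r : ℕ) + 1) := by
      have : Pf a b ((r:ℕ)+1) - Pf a b (r:ℕ) = eP a b r := by
        rw [Pf, Pf, ← Finset.sum_sub_distrib]
        rw [Finset.sum_eq_single r]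
        · simp
        · intro x _ hx
          have : (x : ℕ) ≠ (r : ℕ) := fun hc => hx (Fin.ext hc)
          split_ifs <;> (try ring) <;> omega
        · simp
      have he : eP a b r = 1 := by simp [eP, ha, hb]
      omega
    apply le_antisymm
    · apply Finset.sup_le
      intro w hw
      rw [Finset.mem_Icc] at hw
      obtain ⟨huw, hwv⟩ := hw
      by_cases hwr : w ≤ (r : ℕ)
      · -- compare with w' = r+1
        have hmem : (r : ℕ) + 1 ∈ Finset.Icc u v := by rw [Finset.mem_Icc]; omega
        refine le_trans ?_ (Finset.le_sup hmem)
        have h1 : cnt a' u w = cnt a u w := by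
          rw [ha', (cnt_update_false a r ha u w).1, if_neg (by omega)]; omega
        have h2 : cnt b' w v = cnt b w v + 1 := by
          rw [hb', cnt_update_true b r hb, if_pos (by omega)]
        rw [h1, h2]
        have hZ1 := termZ a b huw hwv
        have hZ2 := termZ a b (show u ≤ (r:ℕ)+1 by omega) (show (r:ℕ)+1 ≤ v by omega)
        have := hfirst w hwr
        omega
      · have h1 : cnt a u w = cnt a' u w + 1 := by
          rw [ha', (cnt_update_false a r ha u w).2, if_pos (by omega)]
        have h2 : cnt b' w v = cnt b w v := by
          rw [hb', cnt_update_true b r hb, if_neg (by omega)]; omega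
        have hmem : w ∈ Finset.Icc u v := by rw [Finset.mem_Icc]; omega
        refine le_trans ?_ (Finset.le_sup hmem)
        omega
    · apply Finset.sup_le
      intro w hw
      rw [Finset.mem_Icc] at hw
      obtain ⟨huw, hwv⟩ := hw
      by_cases hwr : w ≤ (r : ℕ)
      · have h1 : cnt a' u w = cnt a u w := by
          rw [ha', (cnt_update_false a r ha u w).1, if_neg (by omega)]; omega
        have h2 : cnt b' w v = cnt b w v + 1 := by
          rw [hb', cnt_update_true b r hb, if_pos (by omega)]
        have hmem : w ∈ Finset.Icc u v := by rw [Finset.mem_Icc]; omega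
        refine le_trans ?_ (Finset.le_sup hmem)
        omega
      · -- compare with w' = r
        have hmem : (r : ℕ) ∈ Finset.Icc u v := by rw [Finset.mem_Icc]; omega
        refine le_trans ?_ (Finset.le_sup hmem)
        have h1 : cnt a' u (r : ℕ) = cnt a u (r : ℕ) := by
          rw [ha', (cnt_update_false a r ha u _).1, if_neg (by omega)]; omega
        have h2 : cnt b' ((r : ℕ)) v = cnt b ((r : ℕ)) v + 1 := by
          rw [hb', cnt_update_true b r hb, if_pos (by omega)]
        rw [h1, h2]
        have hZ1 := termZ a b huw hwv
        have hZ2 := termZ a b (show u ≤ (r:ℕ) by omega) (show (r:ℕ) ≤ v by omega)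
        have := hmax w (by omega)
        omega
  · -- no interaction
    apply Finset.sup_congr rfl
    intro w hw
    rw [Finset.mem_Icc] at hw
    have h1 : cnt a' u w = cnt a u w := by
      rw [ha', (cnt_update_false a r ha u w).1, if_neg (by omega)]; omega
    have h2 : cnt b' w v = cnt b w v := by
      rw [hb', cnt_update_true b r hb, if_neg (by omega)]; omega
    rw [h1, h2]

end ODB
section Mod2
open Finset
namespace ODB
variable {m : ℕ}

lemma Pf_zero (a b : Fin m → Bool) : Pf a b 0 = 0 := by simp [Pf]

lemma Pf_stable (a b : Fin m → Bool) {t : ℕ} (ht : m ≤ t) : Pf a b t = Pf a b m := by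
  apply Finset.sum_congr rfl
  intro x _
  have hx := x.isLt
  rw [if_pos (by omega), if_pos (by omega)]

lemma Pf_succ (a b : Fin m → Bool) {t : ℕ} (ht : t < m) :
    Pf a b (t + 1) = Pf a b t + eP a b ⟨t, ht⟩ := by
  have : Pf a b (t+1) - Pf a b t = eP a b ⟨t, ht⟩ := by
    rw [Pf, Pf, ← Finset.sum_sub_distrib]
    rw [Finset.sum_eq_single (⟨t, ht⟩ : Fin m)]
    · simp
    · intro x _ hx
      have : (x:ℕ) ≠ t := fun hc => hx (Fin.ext hc)
      split_ifs <;> (try ring) <;> omega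
    · simp
  omega

lemma eP_one_iff (a b : Fin m → Bool) (x : Fin m) :
    eP a b x = 1 ↔ (a x = true ∧ b x = false) := by
  rcases Bool.eq_false_or_eq_true (a x) with h1 | h1 <;>
    rcases Bool.eq_false_or_eq_true (b x) with h2 | h2 <;> simp [eP, h1, h2]

lemma eP_neg_one_iff (a b : Fin m → Bool) (x : Fin m) :
    eP a b x = -1 ↔ (a x = false ∧ b x = true) := by
  rcases Bool.eq_false_or_eq_true (a x) with h1 | h1 <;>
    rcases Bool.eq_false_or_eq_true (b x) with h2 | h2 <;> simp [eP, h1, h2]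

lemma eP_bounds (a b : Fin m → Bool) (x : Fin m) : -1 ≤ eP a b x ∧ eP a b x ≤ 1 := by
  rcases Bool.eq_false_or_eq_true (a x) with h1 | h1 <;>
    rcases Bool.eq_false_or_eq_true (b x) with h2 | h2 <;> simp [eP, h1, h2]

/-- maximum of the prefix sums -/
def Mval (a b : Fin m → Bool) : ℤ :=
  (Finset.range (m+1)).sup' ⟨0, by simp⟩ (Pf a b)

lemma Pf_le_Mval (a b : Fin m → Bool) (t : ℕ) : Pf a b t ≤ Mval a b := by
  by_cases ht : t ≤ m
  · exact Finset.le_sup' (Pf a b) (by simp; omega)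
  · rw [Pf_stable a b (by omega : m ≤ t)]
    exact Finset.le_sup' (Pf a b) (by simp)

lemma Mval_nonneg (a b : Fin m → Bool) : 0 ≤ Mval a b := by
  have := Pf_le_Mval a b 0
  rw [Pf_zero] at this
  exact this

lemma Mval_exists (a b : Fin m → Bool) : ∃ t, t ≤ m ∧ Pf a b t = Mval a b := by
  obtain ⟨t, ht, hval⟩ := Finset.exists_mem_eq_sup' (⟨0, by simp⟩ : (Finset.range (m+1)).Nonempty) (Pf a b)
  exact ⟨t, Nat.lt_succ_iff.mp (Finset.mem_range.mp ht), hval.symm⟩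

/-- first attainment of the maximum -/
noncomputable def tF (a b : Fin m → Bool) : ℕ := Nat.find (Mval_exists a b)

lemma tF_le (a b : Fin m → Bool) : tF a b ≤ m := (Nat.find_spec (Mval_exists a b)).1

lemma Pf_tF (a b : Fin m → Bool) : Pf a b (tF a b) = Mval a b :=
  (Nat.find_spec (Mval_exists a b)).2

lemma Pf_lt_of_lt_tF (a b : Fin m → Bool) {w : ℕ} (hw : w < tF a b) :
    Pf a b w < Mval a b := by
  have hne := Nat.find_min (Mval_exists a b) hw
  have hle : w ≤ m := le_trans (le_of_lt hw) (tF_le a b)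
  have := Pf_le_Mval a b w
  rcases lt_or_eq_of_le this with h | h
  · exact h
  · exact absurd ⟨hle, h⟩ hne

lemma tF_pos (a b : Fin m → Bool) (hM : 1 ≤ Mval a b) : 0 < tF a b := by
  rcases Nat.eq_zero_or_pos (tF a b) with h | h
  · have := Pf_tF a b; rw [h, Pf_zero] at this; omega
  · exact h

/-- last attainment of the maximum -/
noncomputable def tL (a b : Fin m → Bool) : ℕ :=
  Nat.findGreatest (fun t => Pf a b t = Mval a b) m

lemma tL_le (a b : Fin m → Bool) : tL a b ≤ m := by
  unfold tL; exact Nat.findGreatest_le m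

lemma Pf_tL (a b : Fin m → Bool) : Pf a b (tL a b) = Mval a b := by
  obtain ⟨t, htm, ht⟩ := Mval_exists a b
  unfold tL
  exact Nat.findGreatest_spec (P := fun t => Pf a b t = Mval a b) htm ht

lemma Pf_ne_of_tL_lt (a b : Fin m → Bool) {w : ℕ} (h1 : tL a b < w) (h2 : w ≤ m) :
    Pf a b w ≠ Mval a b := by
  have h1' : Nat.findGreatest (fun t => Pf a b t = Mval a b) m < w := h1
  exact Nat.findGreatest_is_greatest (P := fun t => Pf a b t = Mval a b) h1' h2

lemma tL_lt_m (a b : Fin m → Bool) (hE : Pf a b m + 1 ≤ Mval a b) : tL a b < m := by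
  rcases lt_or_eq_of_le (tL_le a b) with h | h
  · exact h
  · have := Pf_tL a b; rw [h] at this; omega

/-- crystal lowering operator: flips the 10-row just before the first attainment
of the maximal prefix sum -/
noncomputable def Fop (a b : Fin m → Bool) : (Fin m → Bool) × (Fin m → Bool) :=
  if h : 1 ≤ Mval a b then
    let r : Fin m := ⟨tF a b - 1, by
      have h1 := tF_le a b; have h2 := tF_pos a b h; omega⟩
    (Function.update a r false, Function.update b r true)
  else (a, b)

/-- crystal raising operator: flips the 01-row just after the last attainment
of the maximal prefix sum -/
noncomputable def Eop (a b : Fin m → Bool) : (Fin m → Bool) × (Fin m → Bool) :=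
  if h : Pf a b m + 1 ≤ Mval a b then
    let r : Fin m := ⟨tL a b, tL_lt_m a b h⟩
    (Function.update a r true, Function.update b r false)
  else (a, b)

lemma Fop_prop (a b : Fin m → Bool) (hM : 1 ≤ Mval a b) :
    ∃ r : Fin m, (r:ℕ) + 1 = tF a b ∧ a r = true ∧ b r = false ∧
      Fop a b = (Function.update a r false, Function.update b r true) := by
  have h1 := tF_le a b
  have h2 := tF_pos a b hM
  refine ⟨⟨tF a b - 1, by omega⟩, by simp; omega, ?_, ?_, ?_⟩
  · -- a r = true
    have hstep := Pf_succ a b (show tF a b - 1 < m by omega)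
    have heq : tF a b - 1 + 1 = tF a b := by omega
    rw [heq, Pf_tF] at hstep
    have hlt := Pf_lt_of_lt_tF a b (show tF a b - 1 < tF a b by omega)
    have hb := eP_bounds a b ⟨tF a b - 1, by omega⟩
    have : eP a b ⟨tF a b - 1, by omega⟩ = 1 := by omega
    exact ((eP_one_iff a b _).mp this).1
  · have hstep := Pf_succ a b (show tF a b - 1 < m by omega)
    have heq : tF a b - 1 + 1 = tF a b := by omega
    rw [heq, Pf_tF] at hstep
    have hlt := Pf_lt_of_lt_tF a b (show tF a b - 1 < tF a b by omega)
    have hb := eP_bounds a b ⟨tF a b - 1, by omega⟩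
    have : eP a b ⟨tF a b - 1, by omega⟩ = 1 := by omega
    exact ((eP_one_iff a b _).mp this).2
  · rw [Fop, dif_pos hM]

lemma Eop_prop (a b : Fin m → Bool) (hE : Pf a b m + 1 ≤ Mval a b) :
    ∃ r : Fin m, (r:ℕ) = tL a b ∧ a r = false ∧ b r = true ∧
      Eop a b = (Function.update a r true, Function.update b r false) := by
  have h1 := tL_lt_m a b hE
  refine ⟨⟨tL a b, h1⟩, rfl, ?_, ?_, ?_⟩
  · have hstep := Pf_succ a b h1
    rw [Pf_tL] at hstep
    have hne := Pf_ne_of_tL_lt a b (show tL a b < tL a b + 1 by omega) (by omega)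
    have hle := Pf_le_Mval a b (tL a b + 1)
    have hb := eP_bounds a b ⟨tL a b, h1⟩
    have : eP a b ⟨tL a b, h1⟩ = -1 := by omega
    exact ((eP_neg_one_iff a b _).mp this).1
  · have hstep := Pf_succ a b h1
    rw [Pf_tL] at hstep
    have hne := Pf_ne_of_tL_lt a b (show tL a b < tL a b + 1 by omega) (by omega)
    have hle := Pf_le_Mval a b (tL a b + 1)
    have hb := eP_bounds a b ⟨tL a b, h1⟩
    have : eP a b ⟨tL a b, h1⟩ = -1 := by omega
    exact ((eP_neg_one_iff a b _).mp this).2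
  · rw [Eop, dif_pos hE]

end ODB
end Mod2
section Mod3
open Finset
namespace ODB
variable {m : ℕ}

theorem Fop_main (a b : Fin m → Bool) (hM : 1 ≤ Mval a b) :
    (∀ u v, v ≤ m → kfun (Fop a b).1 (Fop a b).2 u v = kfun a b u v) ∧
    Mval (Fop a b).1 (Fop a b).2 = Mval a b - 1 ∧
    Pf (Fop a b).1 (Fop a b).2 m = Pf a b m - 2 ∧
    Eop (Fop a b).1 (Fop a b).2 = (a, b) ∧
    ((cnt (Fop a b).1 0 m : ℤ) = (cnt a 0 m : ℤ) - 1) ∧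
    ((cnt (Fop a b).2 0 m : ℤ) = (cnt b 0 m : ℤ) + 1) := by
  obtain ⟨r, hrt, har, hbr, hF⟩ := Fop_prop a b hM
  set a' := Function.update a r false with ha'
  set b' := Function.update b r true with hb'
  have hr_lt : (r:ℕ) < m := r.isLt
  have hmax : ∀ w ≤ m, Pf a b w ≤ Pf a b ((r:ℕ)+1) := by
    intro w _; rw [hrt, Pf_tF]; exact Pf_le_Mval a b w
  have hfirst : ∀ w ≤ (r:ℕ), Pf a b w < Pf a b ((r:ℕ)+1) := by
    intro w hw; rw [hrt, Pf_tF]; exact Pf_lt_of_lt_tF a b (by omega)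
  have hPf' : ∀ t, Pf a' b' t = Pf a b t - (if (r:ℕ) < t then 2 else 0) :=
    Pf_flip a b r har hbr
  have hPfr : Pf a b (r:ℕ) = Mval a b - 1 := by
    have hstep := Pf_succ a b hr_lt
    rw [Fin.eta r hr_lt] at hstep
    have he : eP a b r = 1 := (eP_one_iff a b r).mpr ⟨har, hbr⟩
    have hPtop : Pf a b ((r:ℕ)+1) = Mval a b := by rw [hrt]; exact Pf_tF a b
    omega
  have hk : ∀ u v, v ≤ m → kfun a' b' u v = kfun a b u v :=
    fun u v hv => kfun_flip a b r har hbr hmax hfirst u v hv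
  have hM' : Mval a' b' = Mval a b - 1 := by
    apply le_antisymm
    · apply Finset.sup'_le
      intro t hts
      rw [Finset.mem_range] at hts
      rw [hPf' t]
      by_cases h : (r:ℕ) < t
      · have := Pf_le_Mval a b t; rw [if_pos h]; omega
      · rw [if_neg h]
        have : Pf a b t < Mval a b := by
          apply Pf_lt_of_lt_tF a b; omega
        omega
    · have h1 : Pf a' b' (r:ℕ) = Mval a b - 1 := by
        rw [hPf', if_neg (lt_irrefl _), hPfr]; ring
      have := Pf_le_Mval a' b' (r:ℕ)
      omega
  have hPm' : Pf a' b' m = Pf a b m - 2 := by rw [hPf' m, if_pos hr_lt]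
  have hE' : Pf a' b' m + 1 ≤ Mval a' b' := by
    have := Pf_le_Mval a b m; omega
  have htL' : tL a' b' = (r:ℕ) := by
    have hattain : Pf a' b' (r:ℕ) = Mval a' b' := by
      rw [hPf', if_neg (lt_irrefl _), hPfr, hM']; ring
    have hge : (r:ℕ) ≤ tL a' b' := by
      by_contra hcon
      exact (Pf_ne_of_tL_lt a' b' (by omega) (by omega)) hattain
    have hle' : tL a' b' ≤ (r:ℕ) := by
      by_contra hcon
      have h2 := Pf_tL a' b'
      rw [hPf' (tL a' b'), if_pos (by omega)] at h2
      have h3 := Pf_le_Mval a b (tL a' b')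
      rw [hM'] at h2
      omega
    omega
  obtain ⟨r2, hr2, _, _, hEeq⟩ := Eop_prop a' b' hE'
  have hr2r : r2 = r := Fin.ext (by rw [hr2, htL'])
  rw [hr2r] at hEeq
  have hcancel1 : Function.update a' r true = a := by
    funext x; by_cases hx : x = r
    · subst hx; rw [Function.update_self, har]
    · rw [Function.update_of_ne hx, ha', Function.update_of_ne hx]
  have hcancel2 : Function.update b' r false = b := by
    funext x; by_cases hx : x = r
    · subst hx; rw [Function.update_self, hbr]
    · rw [Function.update_of_ne hx, hb', Function.update_of_ne hx]
  have hEinv : Eop a' b' = (a, b) := by rw [hEeq, hcancel1, hcancel2]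
  have hc1 : (cnt a' 0 m : ℤ) = (cnt a 0 m : ℤ) - 1 := by
    have h := (cnt_update_false a r har 0 m).2
    rw [if_pos ⟨Nat.zero_le _, hr_lt⟩] at h
    rw [← ha'] at h
    omega
  have hc2 : (cnt b' 0 m : ℤ) = (cnt b 0 m : ℤ) + 1 := by
    have h := cnt_update_true b r hbr 0 m
    rw [if_pos ⟨Nat.zero_le _, hr_lt⟩] at h
    rw [← hb'] at h
    omega
  rw [hF]
  exact ⟨hk, hM', hPm', hEinv, hc1, hc2⟩

theorem Eop_main (a b : Fin m → Bool) (hE : Pf a b m + 1 ≤ Mval a b) :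
    (∀ u v, v ≤ m → kfun (Eop a b).1 (Eop a b).2 u v = kfun a b u v) ∧
    Mval (Eop a b).1 (Eop a b).2 = Mval a b + 1 ∧
    Pf (Eop a b).1 (Eop a b).2 m = Pf a b m + 2 ∧
    Fop (Eop a b).1 (Eop a b).2 = (a, b) ∧
    ((cnt (Eop a b).1 0 m : ℤ) = (cnt a 0 m : ℤ) + 1) ∧
    ((cnt (Eop a b).2 0 m : ℤ) = (cnt b 0 m : ℤ) - 1) := by
  obtain ⟨r, hrt, har, hbr, hEq⟩ := Eop_prop a b hE
  set a' := Function.update a r true with ha'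
  set b' := Function.update b r false with hb'
  have hr_lt : (r:ℕ) < m := r.isLt
  have ha'r : a' r = true := by rw [ha', Function.update_self]
  have hb'r : b' r = false := by rw [hb', Function.update_self]
  have hback1 : Function.update a' r false = a := by
    funext x; by_cases hx : x = r
    · subst hx; rw [Function.update_self, har]
    · rw [Function.update_of_ne hx, ha', Function.update_of_ne hx]
  have hback2 : Function.update b' r true = b := by
    funext x; by_cases hx : x = r
    · subst hx; rw [Function.update_self, hbr]
    · rw [Function.update_of_ne hx, hb', Function.update_of_ne hx]
  have hPf' : ∀ t, Pf a b t = Pf a' b' t - (if (r:ℕ) < t then 2 else 0) := by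
    intro t
    conv_lhs => rw [← hback1, ← hback2]
    exact Pf_flip a' b' r ha'r hb'r t
  -- Pf a b (r+1) = Mval a b - 1
  have hPr1 : Pf a b ((r:ℕ)+1) = Mval a b - 1 := by
    have hstep := Pf_succ a b hr_lt
    rw [Fin.eta r hr_lt] at hstep
    have he : eP a b r = -1 := (eP_neg_one_iff a b r).mpr ⟨har, hbr⟩
    have hPtL : Pf a b (r:ℕ) = Mval a b := by rw [hrt]; exact Pf_tL a b
    omega
  have hM' : Mval a' b' = Mval a b + 1 := by
    apply le_antisymm
    · apply Finset.sup'_le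
      intro t hts
      rw [Finset.mem_range] at hts
      have h2 := hPf' t
      by_cases h : (r:ℕ) < t
      · rw [if_pos h] at h2
        have hne : Pf a b t ≠ Mval a b := by
          apply Pf_ne_of_tL_lt a b (by omega) (by omega)
        have := Pf_le_Mval a b t
        omega
      · rw [if_neg h] at h2
        have := Pf_le_Mval a b t
        omega
    · have h1 : Pf a' b' ((r:ℕ)+1) = Mval a b + 1 := by
        have h2 := hPf' ((r:ℕ)+1)
        rw [if_pos (by omega)] at h2
        omega
      have := Pf_le_Mval a' b' ((r:ℕ)+1)
      omega
  have hPm' : Pf a' b' m = Pf a b m + 2 := by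
    have h2 := hPf' m
    rw [if_pos hr_lt] at h2
    omega
  have hM1 : 1 ≤ Mval a' b' := by
    have := Mval_nonneg a b; omega
  have htF' : tF a' b' = (r:ℕ) + 1 := by
    have hattain : Pf a' b' ((r:ℕ)+1) = Mval a' b' := by
      have h2 := hPf' ((r:ℕ)+1)
      rw [if_pos (by omega)] at h2
      omega
    have hle' : tF a' b' ≤ (r:ℕ)+1 := Nat.find_min' _ ⟨by omega, hattain⟩
    have hge : (r:ℕ)+1 ≤ tF a' b' := by
      by_contra hcon
      have h2 := Pf_tF a' b'
      have h3 := hPf' (tF a' b')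
      rw [if_neg (by omega)] at h3
      have h4 := Pf_le_Mval a b (tF a' b')
      omega
    omega
  obtain ⟨r2, hr2, _, _, hFeq⟩ := Fop_prop a' b' hM1
  have hr2r : r2 = r := Fin.ext (by omega)
  rw [hr2r] at hFeq
  have hFinv : Fop a' b' = (a, b) := by rw [hFeq, hback1, hback2]
  have hk : ∀ u v, v ≤ m → kfun a' b' u v = kfun a b u v := by
    intro u v hv
    have h := (Fop_main a' b' hM1).1 u v hv
    rw [hFinv] at h
    exact h.symm
  have hc1 : (cnt a' 0 m : ℤ) = (cnt a 0 m : ℤ) + 1 := by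
    have h := cnt_update_true a r har 0 m
    rw [if_pos ⟨Nat.zero_le _, hr_lt⟩] at h
    rw [← ha'] at h
    omega
  have hc2 : (cnt b' 0 m : ℤ) = (cnt b 0 m : ℤ) - 1 := by
    have h := (cnt_update_false b r hbr 0 m).2
    rw [if_pos ⟨Nat.zero_le _, hr_lt⟩] at h
    rw [← hb'] at h
    omega
  rw [hEq]
  exact ⟨hk, hM', hPm', hFinv, hc1, hc2⟩

end ODB
end Mod3
section Mod4
open Finset
namespace ODB
variable {m : ℕ}

noncomputable def Fp (p : (Fin m → Bool) × (Fin m → Bool)) : (Fin m → Bool) × (Fin m → Bool) :=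
  Fop p.1 p.2

noncomputable def Ep (p : (Fin m → Bool) × (Fin m → Bool)) : (Fin m → Bool) × (Fin m → Bool) :=
  Eop p.1 p.2

theorem F_iter (j : ℕ) : ∀ p : (Fin m → Bool) × (Fin m → Bool),
    (j:ℤ) ≤ Mval p.1 p.2 →
    (∀ u v, v ≤ m → kfun (Fp^[j] p).1 (Fp^[j] p).2 u v = kfun p.1 p.2 u v) ∧
    Mval (Fp^[j] p).1 (Fp^[j] p).2 = Mval p.1 p.2 - j ∧
    Pf (Fp^[j] p).1 (Fp^[j] p).2 m = Pf p.1 p.2 m - 2*j ∧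
    Ep^[j] (Fp^[j] p) = p ∧
    ((cnt (Fp^[j] p).1 0 m : ℤ) = (cnt p.1 0 m : ℤ) - j) ∧
    ((cnt (Fp^[j] p).2 0 m : ℤ) = (cnt p.2 0 m : ℤ) + j) := by
  induction j with
  | zero => intro p _; simp
  | succ j ih =>
    intro p hj
    have hM : 1 ≤ Mval p.1 p.2 := by push_cast at hj; omega
    obtain ⟨hk, hMv, hPm, hEF, hca, hcb⟩ := Fop_main p.1 p.2 hM
    have hFp : Fp p = Fop p.1 p.2 := rfl
    have hstep : Fp^[j+1] p = Fp^[j] (Fp p) := Function.iterate_succ_apply Fp j p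
    have hj' : (j:ℤ) ≤ Mval (Fp p).1 (Fp p).2 := by
      rw [hFp, hMv]; push_cast at hj ⊢; omega
    obtain ⟨ihk, ihM, ihD, ihEF, ihca, ihcb⟩ := ih (Fp p) hj'
    rw [← hFp] at hk hMv hPm hEF hca hcb
    refine ⟨?_, ?_, ?_, ?_, ?_, ?_⟩
    · intro u v hv
      rw [hstep, ihk u v hv]
      exact hk u v hv
    · rw [hstep, ihM, hMv]; push_cast; ring
    · rw [hstep, ihD, hPm]; push_cast; ring
    · rw [hstep, Function.iterate_succ_apply' Ep j, ihEF]
      show Eop (Fp p).1 (Fp p).2 = p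
      rw [hEF]
    · rw [hstep, ihca, hca]; push_cast; ring
    · rw [hstep, ihcb, hcb]; push_cast; ring

theorem E_iter (j : ℕ) : ∀ p : (Fin m → Bool) × (Fin m → Bool),
    (j:ℤ) ≤ Mval p.1 p.2 - Pf p.1 p.2 m →
    (∀ u v, v ≤ m → kfun (Ep^[j] p).1 (Ep^[j] p).2 u v = kfun p.1 p.2 u v) ∧
    Mval (Ep^[j] p).1 (Ep^[j] p).2 = Mval p.1 p.2 + j ∧
    Pf (Ep^[j] p).1 (Ep^[j] p).2 m = Pf p.1 p.2 m + 2*j ∧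
    Fp^[j] (Ep^[j] p) = p ∧
    ((cnt (Ep^[j] p).1 0 m : ℤ) = (cnt p.1 0 m : ℤ) + j) ∧
    ((cnt (Ep^[j] p).2 0 m : ℤ) = (cnt p.2 0 m : ℤ) - j) := by
  induction j with
  | zero => intro p _; simp
  | succ j ih =>
    intro p hj
    have hM : Pf p.1 p.2 m + 1 ≤ Mval p.1 p.2 := by push_cast at hj; omega
    obtain ⟨hk, hMv, hPm, hFE, hca, hcb⟩ := Eop_main p.1 p.2 hM
    have hEp : Ep p = Eop p.1 p.2 := rfl
    have hstep : Ep^[j+1] p = Ep^[j] (Ep p) := Function.iterate_succ_apply Ep j p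
    have hj' : (j:ℤ) ≤ Mval (Ep p).1 (Ep p).2 - Pf (Ep p).1 (Ep p).2 m := by
      rw [hEp, hMv, hPm]; push_cast at hj ⊢; omega
    obtain ⟨ihk, ihM, ihD, ihFE, ihca, ihcb⟩ := ih (Ep p) hj'
    rw [← hEp] at hk hMv hPm hFE hca hcb
    refine ⟨?_, ?_, ?_, ?_, ?_, ?_⟩
    · intro u v hv
      rw [hstep, ihk u v hv]
      exact hk u v hv
    · rw [hstep, ihM, hMv]; push_cast; ring
    · rw [hstep, ihD, hPm]; push_cast; ring
    · rw [hstep, Function.iterate_succ_apply' Fp j, ihFE]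
      show Fop (Ep p).1 (Ep p).2 = p
      rw [hFE]
    · rw [hstep, ihca, hca]; push_cast; ring
    · rw [hstep, ihcb, hcb]; push_cast; ring

/-- the pair involution -/
noncomputable def PhiP (p : (Fin m → Bool) × (Fin m → Bool)) :
    (Fin m → Bool) × (Fin m → Bool) :=
  if 0 ≤ Pf p.1 p.2 m then Fp^[(Pf p.1 p.2 m).toNat] p
  else Ep^[(-(Pf p.1 p.2 m)).toNat] p

lemma Pf_m_eq_cnt (a b : Fin m → Bool) :
    Pf a b m = (cnt a 0 m : ℤ) - (cnt b 0 m : ℤ) := by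
  have h := termZ a b (Nat.zero_le m) (le_refl m)
  have h0 : cnt b m m = 0 := by
    rw [cnt]
    apply Finset.card_eq_zero.mpr
    apply Finset.filter_eq_empty_iff.mpr
    intro x _
    have := x.isLt
    omega
  rw [h0, Pf_zero] at h
  omega

theorem PhiP_main (p : (Fin m → Bool) × (Fin m → Bool)) :
    (∀ u v, v ≤ m → kfun (PhiP p).1 (PhiP p).2 u v = kfun p.1 p.2 u v) ∧
    cnt (PhiP p).1 0 m = cnt p.2 0 m ∧
    cnt (PhiP p).2 0 m = cnt p.1 0 m ∧
    PhiP (PhiP p) = p := by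
  by_cases hd : 0 ≤ Pf p.1 p.2 m
  · set j := (Pf p.1 p.2 m).toNat with hjdef
    have hjval : (j:ℤ) = Pf p.1 p.2 m := Int.toNat_of_nonneg hd
    have hjle : (j:ℤ) ≤ Mval p.1 p.2 := by rw [hjval]; exact Pf_le_Mval p.1 p.2 m
    obtain ⟨hk, hMv, hPm, hEF, hca, hcb⟩ := F_iter j p hjle
    have hPhi : PhiP p = Fp^[j] p := by rw [PhiP, if_pos hd]
    have hDnew : Pf (Fp^[j] p).1 (Fp^[j] p).2 m = -(Pf p.1 p.2 m) := by
      rw [hPm, hjval]; ring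
    have hcnt : Pf p.1 p.2 m = (cnt p.1 0 m : ℤ) - (cnt p.2 0 m : ℤ) :=
      Pf_m_eq_cnt p.1 p.2
    refine ⟨by rw [hPhi]; exact hk, ?_, ?_, ?_⟩
    · rw [hPhi]
      have : (cnt (Fp^[j] p).1 0 m : ℤ) = (cnt p.2 0 m : ℤ) := by
        rw [hca, hjval]; omega
      exact_mod_cast this
    · rw [hPhi]
      have : (cnt (Fp^[j] p).2 0 m : ℤ) = (cnt p.1 0 m : ℤ) := by
        rw [hcb, hjval]; omega
      exact_mod_cast this
    · rw [hPhi]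
      rcases eq_or_lt_of_le hd with h0 | h0
      · have hj0 : j = 0 := by omega
        rw [hj0]
        simp only [Function.iterate_zero, id_eq]
        rw [PhiP, if_pos hd, ← hjdef, hj0]
        simp
      · rw [PhiP, if_neg (by rw [hDnew]; omega)]
        rw [hDnew]
        have : (- - Pf p.1 p.2 m).toNat = j := by omega
        rw [this, hEF]
  · set j := (-(Pf p.1 p.2 m)).toNat with hjdef
    have hjval : (j:ℤ) = -(Pf p.1 p.2 m) := Int.toNat_of_nonneg (by omega)
    have hjle : (j:ℤ) ≤ Mval p.1 p.2 - Pf p.1 p.2 m := by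
      have := Mval_nonneg p.1 p.2; omega
    obtain ⟨hk, hMv, hPm, hFE, hca, hcb⟩ := E_iter j p hjle
    have hPhi : PhiP p = Ep^[j] p := by rw [PhiP, if_neg hd]
    have hDnew : Pf (Ep^[j] p).1 (Ep^[j] p).2 m = -(Pf p.1 p.2 m) := by
      rw [hPm, hjval]; ring
    have hcnt : Pf p.1 p.2 m = (cnt p.1 0 m : ℤ) - (cnt p.2 0 m : ℤ) :=
      Pf_m_eq_cnt p.1 p.2
    refine ⟨by rw [hPhi]; exact hk, ?_, ?_, ?_⟩
    · rw [hPhi]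
      have : (cnt (Ep^[j] p).1 0 m : ℤ) = (cnt p.2 0 m : ℤ) := by
        rw [hca, hjval]; omega
      exact_mod_cast this
    · rw [hPhi]
      have : (cnt (Ep^[j] p).2 0 m : ℤ) = (cnt p.1 0 m : ℤ) := by
        rw [hcb, hjval]; omega
      exact_mod_cast this
    · rw [hPhi, PhiP, if_pos (by rw [hDnew]; omega)]
      rw [hDnew]
      have : (- Pf p.1 p.2 m).toNat = j := by omega
      rw [this, hFE]

end ODB
end Mod4
section Mod5
open Finset
namespace ODB
variable {m n : ℕ}

def Rel (x y : Fin m × Fin n) : Prop := x.1 < y.1 ∧ x.2 ≤ y.2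

lemma Rel_trans : ∀ (x y z : Fin m × Fin n), Rel x y → Rel y z → Rel x z :=
  fun _ _ _ h1 h2 => ⟨lt_trans h1.1 h2.1, le_trans h1.2 h2.2⟩

def IsPath (A : Fin m × Fin n → Bool) (l : List (Fin m × Fin n)) : Prop :=
  l.Pairwise Rel ∧ ∀ x ∈ l, A x = true

def HasPath (A : Fin m × Fin n → Bool) (k : ℕ) : Prop :=
  ∃ l, IsPath A l ∧ k ≤ l.length

lemma mem_pathSet_iff_hasPath (A : Fin m × Fin n → Bool) (k : ℕ) :
    (∃ f : Fin k → Fin m × Fin n,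
      (∀ i, A (f i) = true) ∧
      ∀ i j : Fin k, i < j → (f i).1 < (f j).1 ∧ (f i).2 ≤ (f j).2) ↔ HasPath A k := by
  constructor
  · rintro ⟨f, hf1, hf2⟩
    refine ⟨List.ofFn f, ⟨?_, ?_⟩, by simp⟩
    · rw [List.pairwise_ofFn]
      exact fun i j hij => hf2 i j hij
    · intro x hx
      obtain ⟨i, rfl⟩ := List.mem_ofFn.mp hx
      exact hf1 i
  · rintro ⟨l, ⟨hpw, hmem⟩, hlen⟩
    refine ⟨fun i => l.get ⟨i.val, by omega⟩, ?_, ?_⟩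
    · intro i
      apply hmem
      first
      | exact List.get_mem l _ _
      | exact List.get_mem l _
    · intro i j hij
      have := List.pairwise_iff_get.mp hpw ⟨i.val, by omega⟩ ⟨j.val, by omega⟩ hij
      exact this

lemma hasPath_mono (A : Fin m × Fin n → Bool) {k k' : ℕ} (h : k ≤ k') :
    HasPath A k' → HasPath A k := by
  rintro ⟨l, hl, hlen⟩
  exact ⟨l, hl, le_trans h hlen⟩

lemma hasPath_le_m (A : Fin m × Fin n → Bool) (k : ℕ) (h : HasPath A k) : k ≤ m := by
  rw [← mem_pathSet_iff_hasPath] at h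
  obtain ⟨f, _, hf2⟩ := h
  have hinj : Function.Injective (fun i : Fin k => (f i).1) := by
    intro i j hij
    simp only at hij
    rcases lt_trichotomy i j with h | h | h
    · exact absurd (hf2 i j h).1 (by rw [hij]; exact lt_irrefl _)
    · exact h
    · exact absurd (hf2 j i h).1 (by rw [hij]; exact lt_irrefl _)
  simpa using Fintype.card_le_of_injective _ hinj

lemma pathLen_le_iff (A : Fin m × Fin n → Bool) (h : ℕ) :
    pathLen A ≤ h ↔ ∀ k, HasPath A k → k ≤ h := by
  have hbdd : BddAbove {k | ∃ f : Fin k → Fin m × Fin n,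
      (∀ i, A (f i) = true) ∧
      ∀ i j : Fin k, i < j → (f i).1 < (f j).1 ∧ (f i).2 ≤ (f j).2} := by
    refine ⟨m, fun k hk => ?_⟩
    exact hasPath_le_m A k ((mem_pathSet_iff_hasPath A k).mp hk)
  have hne : (0:ℕ) ∈ {k | ∃ f : Fin k → Fin m × Fin n,
      (∀ i, A (f i) = true) ∧
      ∀ i j : Fin k, i < j → (f i).1 < (f j).1 ∧ (f i).2 ≤ (f j).2} :=
    ⟨fun i => i.elim0, fun i => i.elim0, fun i => i.elim0⟩
  rw [pathLen, csSup_le_iff hbdd ⟨0, hne⟩]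
  constructor
  · intro H k hk
    exact H k ((mem_pathSet_iff_hasPath A k).mpr hk)
  · intro H k hk
    exact H k ((mem_pathSet_iff_hasPath A k).mp hk)

end ODB
end Mod5
section Mod6
open Finset
namespace ODB
variable {m n : ℕ}

lemma split3 {α : Type*} {R : α → α → Prop} (f : α → ℕ) (l : List α) (hl : l.Pairwise R)
    (hmono : ∀ x ∈ l, ∀ y ∈ l, R x y → f x ≤ f y) :
    l.filter (fun x => decide (f x = 0)) ++ l.filter (fun x => decide (f x = 1))
        ++ l.filter (fun x => decide (2 ≤ f x)) = l := by
  induction l with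
  | nil => simp
  | cons a tl ih =>
    obtain ⟨hrel, htl⟩ := List.pairwise_cons.mp hl
    have ih' := ih htl (fun x hx y hy hxy => hmono x (by simp [hx]) y (by simp [hy]) hxy)
    have hge : ∀ y ∈ tl, f a ≤ f y := fun y hy =>
      hmono a (by simp) y (by simp [hy]) (hrel y hy)
    simp only [List.filter_cons]
    rcases Nat.lt_or_ge (f a) 1 with h0 | h1
    · have h0 : f a = 0 := by omega
      rw [if_pos (by simp [h0]), if_neg (by simp [h0]), if_neg (by simp [h0])]
      rw [List.cons_append, List.cons_append, ih']
    · rcases Nat.lt_or_ge (f a) 2 with h1' | h2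
      · have h1 : f a = 1 := by omega
        rw [if_neg (by simp [h1]), if_pos (by simp [h1]), if_neg (by simp [h1])]
        have hnil : tl.filter (fun x => decide (f x = 0)) = [] := by
          apply List.filter_eq_nil_iff.mpr
          intro x hx
          have := hge x hx
          simp; omega
        rw [hnil] at ih'
        rw [List.nil_append] at ih'
        rw [hnil, List.nil_append, List.cons_append, ih']
      · rw [if_neg (by simp; omega), if_neg (by simp; omega), if_pos (by simp [h2])]
        have hnil0 : tl.filter (fun x => decide (f x = 0)) = [] := by
          apply List.filter_eq_nil_iff.mpr
          intro x hx; have := hge x hx; simp; omega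
        have hnil1 : tl.filter (fun x => decide (f x = 1)) = [] := by
          apply List.filter_eq_nil_iff.mpr
          intro x hx; have := hge x hx; simp; omega
        rw [hnil0, hnil1] at ih'
        rw [List.nil_append, List.nil_append] at ih'
        rw [hnil0, hnil1, List.nil_append, List.nil_append, ih']

lemma rel_of_mem_head {α : Type*} {R : α → α → Prop} (l : List α) (hne : l ≠ []) (x : α)
    (hx : x ∈ l) (hpw : l.Pairwise R) : x = l.head hne ∨ R (l.head hne) x := by
  cases l with
  | nil => simp at hne
  | cons a tl =>
    obtain ⟨hrel, _⟩ := List.pairwise_cons.mp hpw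
    rcases List.mem_cons.mp hx with rfl | hx'
    · left; rfl
    · right; exact hrel _ hx'

lemma rel_of_mem_getLast {α : Type*} {R : α → α → Prop} :
    ∀ (l : List α) (hne : l ≠ []) (x : α), x ∈ l → l.Pairwise R →
      x = l.getLast hne ∨ R x (l.getLast hne)
  | [], hne, _, _, _ => by simp at hne
  | [a], _, x, hx, _ => by
    left
    simp only [List.mem_singleton] at hx
    simpa [List.getLast] using hx
  | a :: b :: tl, hne, x, hx, hpw => by
    obtain ⟨hrel, htl⟩ := List.pairwise_cons.mp hpw
    have hgl : (a :: b :: tl).getLast hne = (b :: tl).getLast (by simp) :=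
      List.getLast_cons (by simp)
    rcases List.mem_cons.mp hx with rfl | hx'
    · right; rw [hgl]; exact hrel _ (List.getLast_mem _)
    · rw [hgl]; exact rel_of_mem_getLast (b :: tl) (by simp) x hx' htl

/-- counting bound for a path segment within two adjacent columns -/
lemma seg_length_le (a b : Fin m → Bool) (c c2 : Fin n) (hcc : (c:ℕ) + 1 = (c2:ℕ))
    (u v : ℕ) (lm : List (Fin m × Fin n)) (hpw : lm.Pairwise Rel)
    (hmem : ∀ x ∈ lm, (x.2 = c → a x.1 = true) ∧ (x.2 = c2 → b x.1 = true)
      ∧ (x.2 = c ∨ x.2 = c2) ∧ u ≤ (x.1:ℕ) ∧ (x.1:ℕ) < v) :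
    lm.length ≤ kfun a b u v := by
  by_cases hlm : lm = []
  · subst hlm; simp
  -- u ≤ v
  obtain ⟨x0, hx0⟩ := List.exists_mem_of_ne_nil lm hlm
  have huv : u ≤ v := by
    have := (hmem x0 hx0).2.2.2; omega
  have hmono : ∀ x ∈ lm, ∀ y ∈ lm, Rel x y →
      (fun x : Fin m × Fin n => if x.2 = c then 0 else 1) x
        ≤ (fun x : Fin m × Fin n => if x.2 = c then 0 else 1) y := by
    intro x hx y hy hxy
    simp only
    by_cases hyc : y.2 = c
    · rcases (hmem x hx).2.2.1 with h | h
      · simp [h, hyc]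
      · exfalso
        have hle := hxy.2
        rw [h, hyc] at hle
        have : (c2:ℕ) ≤ (c:ℕ) := hle
        omega
    · rw [if_neg hyc]; split_ifs <;> omega
  have hsplit := split3 (fun x : Fin m × Fin n => if x.2 = c then 0 else 1) lm hpw hmono
  set la := lm.filter (fun x => decide ((if x.2 = c then 0 else 1) = 0)) with hla
  set lb := lm.filter (fun x => decide ((if x.2 = c then 0 else 1) = 1)) with hlb
  have hlc : lm.filter (fun x : Fin m × Fin n => decide (2 ≤ if x.2 = c then 0 else 1)) = [] := by
    apply List.filter_eq_nil_iff.mpr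
    intro x _; simp; split_ifs <;> omega
  rw [hlc, List.append_nil] at hsplit
  -- membership facts
  have hla_mem : ∀ x ∈ la, x.2 = c ∧ a x.1 = true ∧ u ≤ (x.1:ℕ) ∧ (x.1:ℕ) < v := by
    intro x hx
    have hxl := List.mem_of_mem_filter hx
    have hpred := List.of_mem_filter hx
    simp only [decide_eq_true_eq] at hpred
    have hc : x.2 = c := by
      by_contra hcon; rw [if_neg hcon] at hpred; omega
    exact ⟨hc, (hmem x hxl).1 hc, (hmem x hxl).2.2.2⟩
  have hlb_mem : ∀ x ∈ lb, x.2 = c2 ∧ b x.1 = true ∧ u ≤ (x.1:ℕ) ∧ (x.1:ℕ) < v := by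
    intro x hx
    have hxl := List.mem_of_mem_filter hx
    have hpred := List.of_mem_filter hx
    simp only [decide_eq_true_eq] at hpred
    have hc : x.2 ≠ c := fun hcon => by rw [if_pos hcon] at hpred; omega
    have hc2 : x.2 = c2 := by
      rcases (hmem x hxl).2.2.1 with h | h
      · exact absurd h hc
      · exact h
    exact ⟨hc2, (hmem x hxl).2.1 hc2, (hmem x hxl).2.2.2⟩
  have hla_pw : la.Pairwise Rel := hpw.filter _
  have hlb_pw : lb.Pairwise Rel := hpw.filter _
  have hcross : ∀ x ∈ la, ∀ y ∈ lb, Rel x y := by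
    rw [← hsplit] at hpw
    have := (List.pairwise_append.mp hpw).2.2
    exact this
  -- choose w
  by_cases hlaE : la = []
  · -- w = u
    have hlen : lm.length = lb.length := by
      rw [← hsplit, hlaE]; simp
    have hbound : lb.length ≤ cnt b u v := by
      have hnd : (lb.map Prod.fst).Nodup := by
        have : (lb.map Prod.fst).Pairwise (· < ·) :=
          hlb_pw.map _ (fun x y hxy => hxy.1)
        exact this.imp ne_of_lt
      have hlen2 : lb.length = (lb.map Prod.fst).toFinset.card := by
        rw [List.toFinset_card_of_nodup hnd, List.length_map]
      rw [hlen2, cnt]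
      apply Finset.card_le_card
      intro i hi
      rw [List.mem_toFinset] at hi
      obtain ⟨x, hx, rfl⟩ := List.mem_map.mp hi
      obtain ⟨_, hb, h1, h2⟩ := hlb_mem x hx
      exact Finset.mem_filter.mpr ⟨Finset.mem_univ _, h1, h2, hb⟩
    have hw : u ∈ Finset.Icc u v := Finset.mem_Icc.mpr ⟨le_refl u, huv⟩
    calc lm.length = lb.length := hlen
      _ ≤ cnt b u v := hbound
      _ ≤ cnt a u u + cnt b u v := Nat.le_add_left _ _
      _ ≤ kfun a b u v := by rw [kfun]; exact Finset.le_sup (f := fun w => cnt a u w + cnt b w v) hw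
  · set w := ((la.getLast hlaE).1 : ℕ) + 1 with hwdef
    have hlast : la.getLast hlaE ∈ la := List.getLast_mem _
    have hlastm := hla_mem _ hlast
    have huw : u ≤ w := by omega
    have hwv : w ≤ v := by omega
    have hboundA : la.length ≤ cnt a u w := by
      have hnd : (la.map Prod.fst).Nodup := by
        have : (la.map Prod.fst).Pairwise (· < ·) :=
          hla_pw.map _ (fun x y hxy => hxy.1)
        exact this.imp ne_of_lt
      have hlen2 : la.length = (la.map Prod.fst).toFinset.card := by
        rw [List.toFinset_card_of_nodup hnd, List.length_map]
      rw [hlen2, cnt]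
      apply Finset.card_le_card
      intro i hi
      rw [List.mem_toFinset] at hi
      obtain ⟨x, hx, rfl⟩ := List.mem_map.mp hi
      obtain ⟨_, ha2, h1, h2⟩ := hla_mem x hx
      have hxw : (x.1 : ℕ) < w := by
        rcases rel_of_mem_getLast la hlaE x hx hla_pw with heq | hrel
        · rw [heq]; omega
        · have := hrel.1; rw [hwdef]
          have : (x.1:ℕ) < ((la.getLast hlaE).1:ℕ) := this
          omega
      exact Finset.mem_filter.mpr ⟨Finset.mem_univ _, h1, hxw, ha2⟩
    have hboundB : lb.length ≤ cnt b w v := by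
      have hnd : (lb.map Prod.fst).Nodup := by
        have : (lb.map Prod.fst).Pairwise (· < ·) :=
          hlb_pw.map _ (fun x y hxy => hxy.1)
        exact this.imp ne_of_lt
      have hlen2 : lb.length = (lb.map Prod.fst).toFinset.card := by
        rw [List.toFinset_card_of_nodup hnd, List.length_map]
      rw [hlen2, cnt]
      apply Finset.card_le_card
      intro i hi
      rw [List.mem_toFinset] at hi
      obtain ⟨x, hx, rfl⟩ := List.mem_map.mp hi
      obtain ⟨_, hb2, h1, h2⟩ := hlb_mem x hx
      have hxw : w ≤ (x.1 : ℕ) := by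
        have := (hcross _ hlast x hx).1
        rw [hwdef]
        have : ((la.getLast hlaE).1:ℕ) < (x.1:ℕ) := this
        omega
      exact Finset.mem_filter.mpr ⟨Finset.mem_univ _, hxw, h2, hb2⟩
    have hlen : lm.length = la.length + lb.length := by
      rw [← hsplit, List.length_append]
    have hw : w ∈ Finset.Icc u v := Finset.mem_Icc.mpr ⟨huw, hwv⟩
    calc lm.length = la.length + lb.length := hlen
      _ ≤ cnt a u w + cnt b w v := Nat.add_le_add hboundA hboundB
      _ ≤ kfun a b u v := by rw [kfun]; exact Finset.le_sup (f := fun w => cnt a u w + cnt b w v) hw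

/-- constructing a two-column path segment of maximal length -/
lemma seg_construct (a b : Fin m → Bool) (c c2 : Fin n) (hcc : (c:ℕ) + 1 = (c2:ℕ))
    (u v s : ℕ) (hs : s ≤ kfun a b u v) :
    ∃ lm : List (Fin m × Fin n), lm.Pairwise Rel ∧
      (∀ x ∈ lm, (x.2 = c ∧ a x.1 = true ∨ x.2 = c2 ∧ b x.1 = true)
        ∧ u ≤ (x.1:ℕ) ∧ (x.1:ℕ) < v) ∧ s ≤ lm.length := by
  by_cases huv : u ≤ v
  · obtain ⟨w, hwmem, hweq⟩ := Finset.exists_mem_eq_sup (Finset.Icc u v)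
      ⟨u, Finset.mem_Icc.mpr ⟨le_refl u, huv⟩⟩ (fun w => cnt a u w + cnt b w v)
    rw [Finset.mem_Icc] at hwmem
    set sa := (Finset.univ.filter
      (fun i : Fin m => u ≤ (i:ℕ) ∧ (i:ℕ) < w ∧ a i = true)).sort (· ≤ ·) with hsa
    set sb := (Finset.univ.filter
      (fun i : Fin m => w ≤ (i:ℕ) ∧ (i:ℕ) < v ∧ b i = true)).sort (· ≤ ·) with hsb
    have hsa_mem : ∀ i ∈ sa, u ≤ (i:ℕ) ∧ (i:ℕ) < w ∧ a i = true := by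
      intro i hi
      rw [hsa, Finset.mem_sort] at hi
      exact (Finset.mem_filter.mp hi).2
    have hsb_mem : ∀ i ∈ sb, w ≤ (i:ℕ) ∧ (i:ℕ) < v ∧ b i = true := by
      intro i hi
      rw [hsb, Finset.mem_sort] at hi
      exact (Finset.mem_filter.mp hi).2
    have hsa_lt : sa.Pairwise (· < ·) := (Finset.sortedLT_sort _).pairwise
    have hsb_lt : sb.Pairwise (· < ·) := (Finset.sortedLT_sort _).pairwise
    have hcle : c ≤ c2 := by rw [Fin.le_def]; omega
    refine ⟨sa.map (fun i => (i, c)) ++ sb.map (fun i => (i, c2)), ?_, ?_, ?_⟩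
    · rw [List.pairwise_append]
      refine ⟨hsa_lt.map _ (fun x y hxy => ⟨hxy, le_refl c⟩),
        hsb_lt.map _ (fun x y hxy => ⟨hxy, le_refl c2⟩), ?_⟩
      intro x hx y hy
      obtain ⟨i, hi, rfl⟩ := List.mem_map.mp hx
      obtain ⟨j, hj, rfl⟩ := List.mem_map.mp hy
      refine ⟨?_, hcle⟩
      have h1 := (hsa_mem i hi).2.1
      have h2 := (hsb_mem j hj).1
      show i < j
      rw [Fin.lt_def]
      omega
    · intro x hx
      rcases List.mem_append.mp hx with hx' | hx'
      · obtain ⟨i, hi, rfl⟩ := List.mem_map.mp hx'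
        obtain ⟨h1, h2, h3⟩ := hsa_mem i hi
        refine ⟨Or.inl ⟨rfl, h3⟩, h1, ?_⟩
        show (i:ℕ) < v
        omega
      · obtain ⟨i, hi, rfl⟩ := List.mem_map.mp hx'
        obtain ⟨h1, h2, h3⟩ := hsb_mem i hi
        refine ⟨Or.inr ⟨rfl, h3⟩, ?_, h2⟩
        show u ≤ (i:ℕ)
        omega
    · rw [List.length_append, List.length_map, List.length_map, hsa, hsb,
        Finset.length_sort, Finset.length_sort]
      have : kfun a b u v = cnt a u w + cnt b w v := hweq
      rw [this] at hs
      rw [cnt, cnt] at hs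
      exact hs
  · refine ⟨[], List.Pairwise.nil, by simp, ?_⟩
    have : kfun a b u v = 0 := by
      rw [kfun, Finset.Icc_eq_empty (by omega), Finset.sup_empty]
      rfl
    rw [this] at hs
    simpa using hs

end ODB
end Mod6
section Mod7
open Finset
namespace ODB
variable {m n : ℕ}

theorem reroute (A A' : Fin m × Fin n → Bool) (c c2 : Fin n)
    (hcc : (c:ℕ) + 1 = (c2:ℕ))
    (hoff : ∀ x : Fin m × Fin n, x.2 ≠ c → x.2 ≠ c2 → A' x = A x)
    (hkeq : ∀ u v, v ≤ m →
      kfun (fun i => A' (i, c)) (fun i => A' (i, c2)) u v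
        = kfun (fun i => A (i, c)) (fun i => A (i, c2)) u v)
    (k : ℕ) (hp : HasPath A' k) : HasPath A k := by
  obtain ⟨l, ⟨hpw, hmem⟩, hlen⟩ := hp
  have hmono : ∀ x ∈ l, ∀ y ∈ l, Rel x y →
      (fun x : Fin m × Fin n =>
        if (x.2:ℕ) < (c:ℕ) then 0 else if (x.2:ℕ) ≤ (c:ℕ)+1 then 1 else 2) x
      ≤ (fun x : Fin m × Fin n =>
        if (x.2:ℕ) < (c:ℕ) then 0 else if (x.2:ℕ) ≤ (c:ℕ)+1 then 1 else 2) y := by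
    intro x _ y _ hxy
    have hle : (x.2:ℕ) ≤ (y.2:ℕ) := hxy.2
    simp only
    split_ifs <;> omega
  have hsplit := split3 _ l hpw hmono
  set l0 := l.filter (fun x : Fin m × Fin n =>
    decide ((if (x.2:ℕ) < (c:ℕ) then 0 else if (x.2:ℕ) ≤ (c:ℕ)+1 then 1 else 2) = 0)) with hl0
  set l1 := l.filter (fun x : Fin m × Fin n =>
    decide ((if (x.2:ℕ) < (c:ℕ) then 0 else if (x.2:ℕ) ≤ (c:ℕ)+1 then 1 else 2) = 1)) with hl1
  set l2 := l.filter (fun x : Fin m × Fin n =>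
    decide (2 ≤ (if (x.2:ℕ) < (c:ℕ) then 0 else if (x.2:ℕ) ≤ (c:ℕ)+1 then 1 else 2))) with hl2
  have hl0m : ∀ x ∈ l0, (x.2:ℕ) < (c:ℕ) := by
    intro x hx
    have hpred := List.of_mem_filter hx
    simp only [decide_eq_true_eq] at hpred
    split_ifs at hpred <;> omega
  have hl1m : ∀ x ∈ l1, x.2 = c ∨ x.2 = c2 := by
    intro x hx
    have hpred := List.of_mem_filter hx
    simp only [decide_eq_true_eq] at hpred
    by_cases h1 : (x.2:ℕ) < (c:ℕ)
    · rw [if_pos h1] at hpred; omega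
    · by_cases h2 : (x.2:ℕ) ≤ (c:ℕ)+1
      · rcases Nat.eq_or_lt_of_le h2 with h | h
        · right; exact Fin.ext (by omega)
        · left; exact Fin.ext (by omega)
      · rw [if_neg h1, if_neg h2] at hpred; omega
  have hl2m : ∀ x ∈ l2, (c:ℕ) + 1 < (x.2:ℕ) := by
    intro x hx
    have hpred := List.of_mem_filter hx
    simp only [decide_eq_true_eq] at hpred
    split_ifs at hpred <;> omega
  have hl0pw : l0.Pairwise Rel := hpw.filter _
  have hl1pw : l1.Pairwise Rel := hpw.filter _
  have hl2pw : l2.Pairwise Rel := hpw.filter _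
  have hpw' := hpw
  rw [← hsplit] at hpw'
  rw [List.append_assoc] at hpw'
  have hc01 : ∀ x ∈ l0, ∀ y ∈ l1 ++ l2, Rel x y := (List.pairwise_append.mp hpw').2.2
  have hc12 : ∀ x ∈ l1, ∀ y ∈ l2, Rel x y :=
    (List.pairwise_append.mp (List.pairwise_append.mp hpw').2.1).2.2
  -- window
  set u : ℕ := if h : l0 = [] then 0 else ((l0.getLast h).1:ℕ)+1 with hu
  set v : ℕ := if h : l2 = [] then m else ((l2.head h).1:ℕ) with hv
  have hvm : v ≤ m := by
    rw [hv]; split_ifs with h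
    · exact le_refl m
    · exact le_of_lt (Fin.is_lt _)
  have hl0u : ∀ x ∈ l0, (x.1:ℕ) < u := by
    intro x hx
    rw [hu]
    have hne : l0 ≠ [] := List.ne_nil_of_mem hx
    rw [dif_neg hne]
    rcases rel_of_mem_getLast l0 hne x hx hl0pw with heq | hrel
    · rw [heq]; omega
    · have : (x.1:ℕ) < ((l0.getLast hne).1:ℕ) := hrel.1
      omega
  have hl1u : ∀ x ∈ l1, u ≤ (x.1:ℕ) := by
    intro x hx
    rw [hu]
    split_ifs with h
    · omega
    · have hrel := hc01 _ (List.getLast_mem h) x (List.mem_append.mpr (Or.inl hx))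
      have : ((l0.getLast h).1:ℕ) < (x.1:ℕ) := hrel.1
      omega
  have hl1v : ∀ x ∈ l1, (x.1:ℕ) < v := by
    intro x hx
    rw [hv]
    split_ifs with h
    · exact x.1.is_lt
    · have hrel := hc12 x hx _ (List.head_mem h)
      exact hrel.1
  have hl2v : ∀ y ∈ l2, v ≤ (y.1:ℕ) := by
    intro y hy
    rw [hv]
    have hne : l2 ≠ [] := List.ne_nil_of_mem hy
    rw [dif_neg hne]
    rcases rel_of_mem_head l2 hne y hy hl2pw with heq | hrel
    · rw [heq]
    · exact le_of_lt hrel.1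
  -- bound on the middle segment
  have hbound : l1.length ≤ kfun (fun i => A (i, c)) (fun i => A (i, c2)) u v := by
    rw [← hkeq u v hvm]
    apply seg_length_le _ _ c c2 hcc u v l1 hl1pw
    intro x hx
    have hxl : x ∈ l := List.mem_of_mem_filter hx
    refine ⟨?_, ?_, hl1m x hx, hl1u x hx, hl1v x hx⟩
    · intro hx2
      have : (x.1, c) = x := by rw [← hx2]
      rw [this]; exact hmem x hxl
    · intro hx2
      have : (x.1, c2) = x := by rw [← hx2]
      rw [this]; exact hmem x hxl
  obtain ⟨lm, hlmpw, hlmm, hlmlen⟩ :=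
    seg_construct (fun i => A (i, c)) (fun i => A (i, c2)) c c2 hcc u v l1.length hbound
  -- facts about lm members
  have hlm_col : ∀ x ∈ lm, (c:ℕ) ≤ (x.2:ℕ) ∧ (x.2:ℕ) ≤ (c:ℕ)+1 := by
    intro x hx
    rcases (hlmm x hx).1 with ⟨h, _⟩ | ⟨h, _⟩
    · rw [h]; omega
    · rw [h]; omega
  have hlm_true : ∀ x ∈ lm, A x = true := by
    intro x hx
    rcases (hlmm x hx).1 with ⟨h, hA⟩ | ⟨h, hA⟩
    · have : (x.1, c) = x := by rw [← h]
      rw [← this]; exact hA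
    · have : (x.1, c2) = x := by rw [← h]
      rw [← this]; exact hA
  -- the new path
  refine ⟨l0 ++ (lm ++ l2), ⟨?_, ?_⟩, ?_⟩
  · rw [List.pairwise_append]
    refine ⟨hl0pw, ?_, ?_⟩
    · rw [List.pairwise_append]
      refine ⟨hlmpw, hl2pw, ?_⟩
      intro x hx y hy
      constructor
      · have h1 := (hlmm x hx).2.2
        have h2 := hl2v y hy
        have : (x.1:ℕ) < (y.1:ℕ) := by omega
        exact this
      · have h1 := (hlm_col x hx).2
        have h2 := hl2m y hy
        rw [Fin.le_def]
        omega
    · intro x hx y hy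
      rcases List.mem_append.mp hy with hy' | hy'
      · constructor
        · have h1 := hl0u x hx
          have h2 := (hlmm y hy').2.1
          have : (x.1:ℕ) < (y.1:ℕ) := by omega
          exact this
        · have h1 := hl0m x hx
          have h2 := (hlm_col y hy').1
          rw [Fin.le_def]
          omega
      · exact hc01 x hx y (List.mem_append.mpr (Or.inr hy'))
  · intro x hx
    rcases List.mem_append.mp hx with hx' | hx'
    · -- in l0
      have h1 := hl0m x hx'
      have hxl : x ∈ l := List.mem_of_mem_filter hx'
      rw [← hoff x (by intro hh; rw [hh] at h1; omega)
        (by intro hh; rw [hh] at h1; omega)]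
      exact hmem x hxl
    · rcases List.mem_append.mp hx' with hx'' | hx''
      · exact hlm_true x hx''
      · have h1 := hl2m x hx''
        have hxl : x ∈ l := List.mem_of_mem_filter hx''
        rw [← hoff x (by intro hh; rw [hh] at h1; omega)
          (by intro hh; rw [hh] at h1; omega)]
        exact hmem x hxl
  · have hlsum : l0.length + (l1.length + l2.length) = l.length := by
      conv_rhs => rw [← hsplit]
      rw [List.append_assoc, List.length_append, List.length_append]
    rw [List.length_append, List.length_append]
    omega

end ODB
end Mod7
section Mod8
open Finset
namespace ODB
variable {m n : ℕ}

/-- the two-column move on matrices -/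
noncomputable def colSwap (A : Fin m × Fin n → Bool) (c c2 : Fin n) : Fin m × Fin n → Bool :=
  fun x => if x.2 = c then (PhiP (fun i => A (i, c), fun i => A (i, c2))).1 x.1
    else if x.2 = c2 then (PhiP (fun i => A (i, c), fun i => A (i, c2))).2 x.1
    else A x

lemma colSwap_col1 (A : Fin m × Fin n → Bool) (c c2 : Fin n) :
    (fun i => colSwap A c c2 (i, c)) = (PhiP (fun i => A (i, c), fun i => A (i, c2))).1 := by
  funext i; simp [colSwap]

lemma colSwap_col2 (A : Fin m × Fin n → Bool) (c c2 : Fin n) (hne : c ≠ c2) :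
    (fun i => colSwap A c c2 (i, c2)) = (PhiP (fun i => A (i, c), fun i => A (i, c2))).2 := by
  funext i; simp [colSwap, (Ne.symm hne)]

lemma colSwap_off (A : Fin m × Fin n → Bool) (c c2 : Fin n) (x : Fin m × Fin n)
    (h1 : x.2 ≠ c) (h2 : x.2 ≠ c2) : colSwap A c c2 x = A x := by
  simp [colSwap, h1, h2]

lemma colSwap_involutive (A : Fin m × Fin n → Bool) (c c2 : Fin n) (hne : c ≠ c2) :
    colSwap (colSwap A c c2) c c2 = A := by
  have h1 := colSwap_col1 A c c2
  have h2 := colSwap_col2 A c c2 hne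
  have hPhi := (PhiP_main (fun i => A (i, c), fun i => A (i, c2))).2.2.2
  funext x
  rw [colSwap]
  by_cases hx1 : x.2 = c
  · rw [if_pos hx1]
    have : (fun i => colSwap A c c2 (i, c), fun i => colSwap A c c2 (i, c2))
        = PhiP (fun i => A (i, c), fun i => A (i, c2)) := by
      rw [h1, h2]
    rw [this, hPhi]
    simp only
    rw [← hx1]
  · rw [if_neg hx1]
    by_cases hx2 : x.2 = c2
    · rw [if_pos hx2]
      have : (fun i => colSwap A c c2 (i, c), fun i => colSwap A c c2 (i, c2))
          = PhiP (fun i => A (i, c), fun i => A (i, c2)) := by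
        rw [h1, h2]
      rw [this, hPhi]
      simp only
      rw [← hx2]
    · rw [if_neg hx2]
      exact colSwap_off A c c2 x hx1 hx2

lemma colSwap_hasPath (A : Fin m × Fin n → Bool) (c c2 : Fin n)
    (hcc : (c:ℕ) + 1 = (c2:ℕ)) (k : ℕ) :
    HasPath (colSwap A c c2) k ↔ HasPath A k := by
  have hne : c ≠ c2 := fun h => by rw [h] at hcc; omega
  have hkeq : ∀ u v, v ≤ m →
      kfun (fun i => colSwap A c c2 (i, c)) (fun i => colSwap A c c2 (i, c2)) u v
        = kfun (fun i => A (i, c)) (fun i => A (i, c2)) u v := by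
    intro u v hv
    rw [colSwap_col1, colSwap_col2 A c c2 hne]
    exact (PhiP_main (fun i => A (i, c), fun i => A (i, c2))).1 u v hv
  constructor
  · exact reroute A (colSwap A c c2) c c2 hcc (fun x h1 h2 => colSwap_off A c c2 x h1 h2)
      hkeq k
  · exact reroute (colSwap A c c2) A c c2 hcc
      (fun x h1 h2 => (colSwap_off A c c2 x h1 h2).symm)
      (fun u v hv => (hkeq u v hv).symm) k

lemma colSwap_pathLen (A : Fin m × Fin n → Bool) (c c2 : Fin n)
    (hcc : (c:ℕ) + 1 = (c2:ℕ)) (h : ℕ) :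
    pathLen (colSwap A c c2) ≤ h ↔ pathLen A ≤ h := by
  rw [pathLen_le_iff, pathLen_le_iff]
  constructor
  · intro H k hk
    exact H k ((colSwap_hasPath A c c2 hcc k).mpr hk)
  · intro H k hk
    exact H k ((colSwap_hasPath A c c2 hcc k).mp hk)

end ODB
end Mod8
section Mod9
open Finset MeasureTheory
open scoped ENNReal
namespace ODB
variable {m n : ℕ}

/-- weight of a matrix -/
noncomputable def Wt (q : Fin n → ℝ) (A : Fin m × Fin n → Bool) : ℝ≥0∞ :=
  ∏ x : Fin m × Fin n, (if A x then ENNReal.ofReal (q x.2) else 1 - ENNReal.ofReal (q x.2))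

/-- weight of one column -/
noncomputable def colW (p : ℝ≥0∞) (a : Fin m → Bool) : ℝ≥0∞ :=
  ∏ i : Fin m, (if a i then p else 1 - p)

lemma cnt_full (a : Fin m → Bool) :
    cnt a 0 m = (Finset.univ.filter (fun i : Fin m => a i = true)).card := by
  rw [cnt]
  congr 1
  apply Finset.filter_congr
  intro i _
  have := i.isLt
  constructor
  · rintro ⟨_, _, h⟩; exact h
  · intro h; exact ⟨Nat.zero_le _, i.isLt, h⟩

lemma colW_eq_pow (p : ℝ≥0∞) (a : Fin m → Bool) :
    colW p a = p ^ (cnt a 0 m) * (1 - p) ^ (m - cnt a 0 m) := by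
  rw [colW, ← Finset.prod_filter_mul_prod_filter_not Finset.univ (fun i => a i = true)]
  have h1 : ∏ i ∈ Finset.univ.filter (fun i : Fin m => a i = true),
      (if a i then p else 1 - p) = p ^ (cnt a 0 m) := by
    rw [Finset.prod_congr rfl (fun i hi => if_pos (Finset.mem_filter.mp hi).2),
      Finset.prod_const, cnt_full]
  have h2 : ∏ i ∈ Finset.univ.filter (fun i : Fin m => ¬(a i = true)),
      (if a i then p else 1 - p) = (1 - p) ^ (m - cnt a 0 m) := by
    rw [Finset.prod_congr rfl (fun i hi => if_neg (Finset.mem_filter.mp hi).2),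
      Finset.prod_const]
    congr 1
    have := Finset.card_filter_add_card_filter_not
      (s := (Finset.univ : Finset (Fin m))) (p := fun i => a i = true)
    rw [cnt_full]
    simp only [Finset.card_univ, Fintype.card_fin] at this
    omega
  rw [h1, h2]

lemma Wt_eq_prod_col (q : Fin n → ℝ) (A : Fin m × Fin n → Bool) :
    Wt q A = ∏ j : Fin n, colW (ENNReal.ofReal (q j)) (fun i => A (i, j)) := by
  rw [Wt]
  rw [Fintype.prod_prod_type]
  rw [Finset.prod_comm]
  apply Finset.prod_congr rfl
  intro j _
  rw [colW]

lemma prod_swap_pair {β : Type*} [CommMonoid β] (F G : Fin n → β) (c c2 : Fin n)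
    (hne : c ≠ c2) (hoff : ∀ j, j ≠ c → j ≠ c2 → F j = G j)
    (hpair : F c * F c2 = G c * G c2) : ∏ j, F j = ∏ j, G j := by
  have hc2mem : c2 ∈ Finset.univ.erase c := Finset.mem_erase.mpr ⟨Ne.symm hne, Finset.mem_univ _⟩
  rw [← Finset.mul_prod_erase Finset.univ F (Finset.mem_univ c),
    ← Finset.mul_prod_erase _ F hc2mem,
    ← Finset.mul_prod_erase Finset.univ G (Finset.mem_univ c),
    ← Finset.mul_prod_erase _ G hc2mem, ← mul_assoc, ← mul_assoc, hpair]
  congr 1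
  apply Finset.prod_congr rfl
  intro j hj
  rw [Finset.mem_erase, Finset.mem_erase] at hj
  exact hoff j hj.2.1 hj.1

lemma weight_swap (q : Fin n → ℝ) (c c2 : Fin n) (hne : c ≠ c2)
    (A : Fin m × Fin n → Bool) :
    Wt (fun j => q (Equiv.swap c c2 j)) (colSwap A c c2) = Wt q A := by
  rw [Wt_eq_prod_col, Wt_eq_prod_col]
  set p := (fun i => A (i, c), fun i => A (i, c2)) with hp
  obtain ⟨_, hc1, hc2, _⟩ := PhiP_main p
  apply prod_swap_pair _ _ c c2 hne
  · intro j hj1 hj2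
    have hsj : Equiv.swap c c2 j = j := Equiv.swap_apply_of_ne_of_ne hj1 hj2
    rw [hsj]
    congr 1
    funext i
    exact colSwap_off A c c2 (i, j) hj1 hj2
  · rw [Equiv.swap_apply_left, Equiv.swap_apply_right]
    rw [colSwap_col1, colSwap_col2 A c c2 hne]
    rw [colW_eq_pow, colW_eq_pow, colW_eq_pow, colW_eq_pow]
    rw [← hp, hc1, hc2]
    show (ENNReal.ofReal (q c2)) ^ cnt p.2 0 m * (1 - ENNReal.ofReal (q c2)) ^ (m - cnt p.2 0 m)
      * ((ENNReal.ofReal (q c)) ^ cnt p.1 0 m * (1 - ENNReal.ofReal (q c)) ^ (m - cnt p.1 0 m))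
      = (ENNReal.ofReal (q c)) ^ cnt p.1 0 m * (1 - ENNReal.ofReal (q c)) ^ (m - cnt p.1 0 m)
      * ((ENNReal.ofReal (q c2)) ^ cnt p.2 0 m * (1 - ENNReal.ofReal (q c2)) ^ (m - cnt p.2 0 m))
    ring

lemma measurable_all (S : Set (Fin m × Fin n → Bool)) : MeasurableSet S := by
  have hsing : ∀ A : Fin m × Fin n → Bool, MeasurableSet ({A} : Set (Fin m × Fin n → Bool)) := by
    intro A
    rw [← Set.univ_pi_singleton A]
    exact MeasurableSet.univ_pi (fun i => measurableSet_singleton (A i))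
  have : S = ⋃ A ∈ S, {A} := by simp
  rw [this]
  exact MeasurableSet.biUnion (Set.to_countable S) (fun A _ => hsing A)

lemma colBern_singleton (q : Fin n → ℝ) (hq : ∀ j, q j ≤ 1) (A : Fin m × Fin n → Bool) :
    colBernoulliMatrixMeasure m n q hq {A} = Wt q A := by
  rw [colBernoulliMatrixMeasure, ← Set.univ_pi_singleton A, Measure.pi_pi, Wt]
  apply Finset.prod_congr rfl
  intro x _
  rw [PMF.toMeasure_apply_singleton _ _ (measurableSet_singleton _), PMF.bernoulli_apply]
  cases hAx : A x <;> simp <;> rfl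

lemma colBern_apply (q : Fin n → ℝ) (hq : ∀ j, q j ≤ 1) (S : Set (Fin m × Fin n → Bool)) :
    colBernoulliMatrixMeasure m n q hq S
      = ∑ A ∈ Finset.univ.filter (fun A => A ∈ S), Wt q A := by
  have hS : S = ⋃ A ∈ (Finset.univ.filter (fun A : Fin m × Fin n → Bool => A ∈ S)),
      ({A} : Set (Fin m × Fin n → Bool)) := by
    ext B
    simp
  conv_lhs => rw [hS]
  rw [measure_biUnion_finset]
  · exact Finset.sum_congr rfl (fun A _ => colBern_singleton q hq A)
  · intro x _ y _ hxy
    simp only [Function.onFun]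
    exact Set.disjoint_singleton.mpr hxy
  · intro A _
    exact measurable_all _

end ODB
end Mod9
section Mod10
open Finset MeasureTheory
open scoped ENNReal
namespace ODB
variable {m n : ℕ}

noncomputable def Prob (m n : ℕ) (h : ℕ) (q : Fin n → ℝ) : ℝ≥0∞ :=
  ∑ A ∈ Finset.univ.filter
    (fun A : Fin m × Fin n → Bool => A ∈ {A : Fin m × Fin n → Bool | pathLen A ≤ h}), Wt q A

lemma Prob_adj (h : ℕ) (q : Fin n → ℝ) (c c2 : Fin n) (hcc : (c:ℕ) + 1 = (c2:ℕ)) :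
    Prob m n h q = Prob m n h (fun j => q (Equiv.swap c c2 j)) := by
  have hne : c ≠ c2 := fun hcon => by rw [hcon] at hcc; omega
  rw [Prob, Prob]
  apply Finset.sum_bij' (fun A _ => colSwap A c c2) (fun A _ => colSwap A c c2)
  · intro A hA
    rw [Finset.mem_filter] at hA ⊢
    exact ⟨Finset.mem_univ _, (colSwap_pathLen A c c2 hcc h).mpr hA.2⟩
  · intro A hA
    rw [Finset.mem_filter] at hA ⊢
    exact ⟨Finset.mem_univ _, (colSwap_pathLen A c c2 hcc h).mpr hA.2⟩
  · intro A _
    exact colSwap_involutive A c c2 hne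
  · intro A _
    exact colSwap_involutive A c c2 hne
  · intro A _
    exact (weight_swap q c c2 hne A).symm

lemma Prob_swap_lt (h : ℕ) : ∀ (d : ℕ) (x y : Fin n), (x:ℕ) < (y:ℕ) → (y:ℕ) - (x:ℕ) = d →
    ∀ q : Fin n → ℝ, Prob m n h (fun j => q (Equiv.swap x y j)) = Prob m n h q := by
  intro d
  induction d using Nat.strong_induction_on with
  | _ d ih =>
    intro x y hxy hd q
    rcases Nat.lt_or_ge d 2 with hd2 | hd2
    · have hd1 : (x:ℕ) + 1 = (y:ℕ) := by omega
      exact (Prob_adj h q x y hd1).symm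
    · have hyn : (y:ℕ) < n := y.isLt
      set z : Fin n := ⟨(y:ℕ) - 1, by omega⟩ with hz
      have hzv : (z:ℕ) = (y:ℕ) - 1 := rfl
      have hxz : x ≠ z := fun hcon => by
        have : (x:ℕ) = (z:ℕ) := by rw [hcon]
        omega
      have hxy' : x ≠ y := fun hcon => by
        have : (x:ℕ) = (y:ℕ) := by rw [hcon]
        omega
      have hconj : Equiv.swap x y = Equiv.swap z y * Equiv.swap x z * Equiv.swap z y := by
        have hres := Equiv.swap_apply_apply (Equiv.swap z y) x z
        rw [Equiv.swap_apply_of_ne_of_ne hxz hxy', Equiv.swap_apply_left] at hres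
        rw [hres, Equiv.swap_inv]
      set q1 : Fin n → ℝ := fun j2 => q (Equiv.swap z y j2) with hq1d
      set q2 : Fin n → ℝ := fun j1 => q1 (Equiv.swap x z j1) with hq2d
      have hzy1 : (z:ℕ) + 1 = (y:ℕ) := by omega
      have hfun : (fun j => q (Equiv.swap x y j)) = (fun j => q2 (Equiv.swap z y j)) := by
        funext j
        rw [hq2d, hq1d, hconj]
        rfl
      rw [hfun]
      calc Prob m n h (fun j => q2 (Equiv.swap z y j))
          = Prob m n h q2 := (Prob_adj h q2 z y hzy1).symm
        _ = Prob m n h q1 := ih (d-1) (by omega) x z (by omega) (by omega) q1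
        _ = Prob m n h q := (Prob_adj h q z y hzy1).symm

lemma Prob_swap_all (h : ℕ) (x y : Fin n) (q : Fin n → ℝ) :
    Prob m n h (fun j => q (Equiv.swap x y j)) = Prob m n h q := by
  rcases Nat.lt_trichotomy (x:ℕ) (y:ℕ) with hlt | heq | hgt
  · exact Prob_swap_lt h _ x y hlt rfl q
  · have hxy : x = y := Fin.ext heq
    subst hxy
    rw [Equiv.swap_self]
    rfl
  · rw [Equiv.swap_comm]
    exact Prob_swap_lt h _ y x hgt rfl q

lemma colBern_eq_Prob (h : ℕ) (q : Fin n → ℝ) (hq : ∀ j, q j ≤ 1) :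
    colBernoulliMatrixMeasure m n q hq {A | pathLen A ≤ h} = Prob m n h q := by
  rw [colBern_apply, Prob]
  congr 1
  rw [Finset.filter_congr_decidable, Finset.filter_congr_decidable]

theorem Prob_perm (h : ℕ) (σ : Equiv.Perm (Fin n)) (q : Fin n → ℝ) :
    Prob m n h (fun j => q (σ j)) = Prob m n h q := by
  revert q
  refine Equiv.Perm.swap_induction_on σ (fun q => rfl) ?_
  intro f x y hxy ihf q
  have hcomp : (fun j => q ((Equiv.swap x y * f) j))
      = (fun j => (fun j1 => q (Equiv.swap x y j1)) (f j)) := rfl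
  rw [hcomp, ihf (fun j1 => q (Equiv.swap x y j1)), Prob_swap_all]

end ODB
end Mod10


/-- Inhomogeneous model: the distribution of the longest increasing path of a random
`m × n` 0-1 matrix with independent entries and column probabilities `q₁, …, q_n` is a
symmetric function of `(q₁, …, q_n)`: permuting the column probabilities does not change
`Prob(L(A) ≤ h)`. -/
theorem pathLen_distribution_symmetric (m n : ℕ) (hm : 1 ≤ m) (hn : 1 ≤ n)
    (q : Fin n → ℝ) (hq0 : ∀ j, 0 < q j) (hq1 : ∀ j, q j < 1)
    (σ : Equiv.Perm (Fin n)) (h : ℕ) :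
    colBernoulliMatrixMeasure m n q (fun j => (hq1 j).le) {A | pathLen A ≤ h} =
      colBernoulliMatrixMeasure m n (q ∘ σ) (fun j => (hq1 (σ j)).le)
        {A | pathLen A ≤ h} := by
  rw [ODB.colBern_eq_Prob, ODB.colBern_eq_Prob]
  exact (ODB.Prob_perm h σ q).symm
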